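/- Let n ≥ 1 and let F_1, …, F_n : ℝ^d → ℝ^d be operators with average F = (1/n)∑_{i=1}^n F_i. Suppose each F_i is ℓ-cocoercive, F is μ-strongly monotone, and the stepsize satisfies 0 < γ ≤ 1/ℓ. Then for every k ∈ {1, …, K}, the SARAH inner-loop trajectory satisfies 𝔼[‖v^k‖²] ≤ (1 − γμ) · 𝔼[‖v^{k−1}‖²]. -/

import Mathlib

open Finset

noncomputable section

/-- An operator `G : ℝ^d → ℝ^d` is `ℓ`-cocoercive:
`‖G(u) - G(v)‖² ≤ ℓ ⟨G(u) - G(v), u - v⟩` for all `u, v`. -/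
def Cocoercive {d : ℕ} (ℓ : ℝ)
    (G : EuclideanSpace ℝ (Fin d) → EuclideanSpace ℝ (Fin d)) : Prop :=
  ∀ u v : EuclideanSpace ℝ (Fin d),
    ‖G u - G v‖ ^ 2 ≤ ℓ * (inner ℝ (G u - G v) (u - v) : ℝ)

/-- An operator `G : ℝ^d → ℝ^d` is `μ`-strongly monotone:
`⟨G(u) - G(v), u - v⟩ ≥ μ ‖u - v‖²` for all `u, v`. -/
def StronglyMonotone {d : ℕ} (μ : ℝ)
    (G : EuclideanSpace ℝ (Fin d) → EuclideanSpace ℝ (Fin d)) : Prop :=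
  ∀ u v : EuclideanSpace ℝ (Fin d),
    μ * ‖u - v‖ ^ 2 ≤ (inner ℝ (G u - G v) (u - v) : ℝ)

/-- The average operator `F = (1/n) ∑_{i=1}^n F_i`. -/
def opAvg {d n : ℕ} (F : Fin n → EuclideanSpace ℝ (Fin d) → EuclideanSpace ℝ (Fin d)) :
    EuclideanSpace ℝ (Fin d) → EuclideanSpace ℝ (Fin d) :=
  fun z => (n : ℝ)⁻¹ • ∑ i, F i z

/-- One step of the SARAH recursion: from `(z, v)` and index `i`, go to `(z', v')`
with `z' = z - γ v` and `v' = F_i(z') - F_i(z) + v`. -/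
def sarahStep {d n : ℕ} (γ : ℝ)
    (F : Fin n → EuclideanSpace ℝ (Fin d) → EuclideanSpace ℝ (Fin d)) (i : Fin n)
    (p : EuclideanSpace ℝ (Fin d) × EuclideanSpace ℝ (Fin d)) :
    EuclideanSpace ℝ (Fin d) × EuclideanSpace ℝ (Fin d) :=
  (p.1 - γ • p.2, F i (p.1 - γ • p.2) - F i p.1 + p.2)

/-- Run SARAH steps along a list of indices. -/
def sarahRun {d n : ℕ} (γ : ℝ)
    (F : Fin n → EuclideanSpace ℝ (Fin d) → EuclideanSpace ℝ (Fin d)) :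
    EuclideanSpace ℝ (Fin d) × EuclideanSpace ℝ (Fin d) → List (Fin n) →
      EuclideanSpace ℝ (Fin d) × EuclideanSpace ℝ (Fin d)
  | p, [] => p
  | p, i :: l => sarahRun γ F (sarahStep γ F i p) l

/-- The SARAH inner-loop trajectory `(z^k, v^k)` started at `z^0 = z0` with
`v^0 = F(z^0)`, for the index sequence `j : Fin K → Fin n` (so `i_k = j (k-1)`):
`sarahTraj γ F z0 j k = (z^k, v^k)` is obtained by performing the SARAH steps
with the first `k` indices `i_1, …, i_k`. -/
def sarahTraj {d n K : ℕ} (γ : ℝ)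
    (F : Fin n → EuclideanSpace ℝ (Fin d) → EuclideanSpace ℝ (Fin d))
    (z0 : EuclideanSpace ℝ (Fin d)) (j : Fin K → Fin n) (k : ℕ) :
    EuclideanSpace ℝ (Fin d) × EuclideanSpace ℝ (Fin d) :=
  sarahRun γ F (z0, opAvg F z0) ((List.ofFn j).take k)


lemma sarahRun_append {d n : ℕ} (γ : ℝ)
    (F : Fin n → EuclideanSpace ℝ (Fin d) → EuclideanSpace ℝ (Fin d))
    (p : EuclideanSpace ℝ (Fin d) × EuclideanSpace ℝ (Fin d))
    (l : List (Fin n)) (i : Fin n) :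
    sarahRun γ F p (l ++ [i]) = sarahStep γ F i (sarahRun γ F p l) := by
  induction l generalizing p with
  | nil => rfl
  | cons a l ih => simp only [List.cons_append, sarahRun]; exact ih _

lemma sarahTraj_succ {d n K : ℕ} (γ : ℝ)
    (F : Fin n → EuclideanSpace ℝ (Fin d) → EuclideanSpace ℝ (Fin d))
    (z0 : EuclideanSpace ℝ (Fin d)) (j : Fin K → Fin n) (m : ℕ) (hm : m < K) :
    sarahTraj γ F z0 j (m + 1)
      = sarahStep γ F (j ⟨m, hm⟩) (sarahTraj γ F z0 j m) := by
  unfold sarahTraj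
  rw [List.take_succ]
  have h1 : (List.ofFn j)[m]? = some (j ⟨m, hm⟩) := by
    simp [List.getElem?_ofFn, hm]
  rw [h1]
  simp [sarahRun_append]

lemma sarahTraj_congr {d n K : ℕ} (γ : ℝ)
    (F : Fin n → EuclideanSpace ℝ (Fin d) → EuclideanSpace ℝ (Fin d))
    (z0 : EuclideanSpace ℝ (Fin d)) (j j' : Fin K → Fin n) (m : ℕ)
    (h : ∀ t : Fin K, (t : ℕ) < m → j t = j' t) :
    sarahTraj γ F z0 j m = sarahTraj γ F z0 j' m := by
  unfold sarahTraj
  congr 1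
  apply List.ext_getElem (by simp)
  intro t h1 h2
  have ht : t < m := by
    simpa using (lt_of_lt_of_le h1 (List.length_take_le _ _))
  have htK : t < K := by
    have := h1
    simp at this
    exact this.2
  simp [List.getElem_take, List.getElem_ofFn]
  exact h ⟨t, htK⟩ ht

lemma key_step {d n : ℕ} (hn : 1 ≤ n) (ℓ μ : ℝ) (hℓ : 0 < ℓ) (hμ : 0 < μ)
    (F : Fin n → EuclideanSpace ℝ (Fin d) → EuclideanSpace ℝ (Fin d))
    (hco : ∀ i, Cocoercive ℓ (F i)) (hsm : StronglyMonotone μ (opAvg F))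
    (γ : ℝ) (hγ0 : 0 < γ) (hγ : γ ≤ 1 / ℓ)
    (q : EuclideanSpace ℝ (Fin d) × EuclideanSpace ℝ (Fin d)) :
    ∑ i : Fin n, ‖(sarahStep γ F i q).2‖ ^ 2 ≤ (n : ℝ) * ((1 - γ * μ) * ‖q.2‖ ^ 2) := by
  obtain ⟨z, v⟩ := q
  set z' : EuclideanSpace ℝ (Fin d) := z - γ • v with hz'
  have hzz : z' - z = (-γ) • v := by rw [hz', neg_smul]; abel
  set w : Fin n → ℝ := fun i => (inner ℝ (F i z' - F i z) v : ℝ) with hw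
  set t : Fin n → ℝ := fun i => (inner ℝ (F i z' - F i z) (z' - z) : ℝ) with ht
  have htw : ∀ i, t i = -γ * w i := by
    intro i
    simp only [ht, hw, hzz, real_inner_smul_right]
  set W : ℝ := ∑ i, w i with hW
  set S : ℝ := (inner ℝ (opAvg F z' - opAvg F z) (z' - z) : ℝ) with hS
  have hγW : γ * W = -((n : ℝ) * S) := by
    have h1 : opAvg F z' - opAvg F z = (n : ℝ)⁻¹ • (∑ i, (F i z' - F i z)) := by
      simp [opAvg, Finset.sum_sub_distrib, smul_sub]
    have h2 : S = (n : ℝ)⁻¹ * ∑ i, t i := by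
      rw [hS, h1, real_inner_smul_left, sum_inner]
    have h3 : ∑ i, t i = -γ * W := by
      simp only [htw, hW, ← Finset.mul_sum]
    have hn0 : (n : ℝ) ≠ 0 := by positivity
    rw [h3] at h2
    rw [h2]
    field_simp
  have hSlb : μ * (γ ^ 2 * ‖v‖ ^ 2) ≤ S := by
    have := hsm z' z
    have hnorm : ‖z' - z‖ ^ 2 = γ ^ 2 * ‖v‖ ^ 2 := by
      rw [hzz, norm_smul]
      simp [abs_of_pos hγ0, mul_pow]
    rw [hnorm] at this
    linarith [this]
  have hγℓ : γ * ℓ ≤ 1 := by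
    rw [le_div_iff₀ hℓ] at hγ
    linarith
  -- per-index bound
  have hper : ∀ i : Fin n,
      ‖(sarahStep γ F i (z, v)).2‖ ^ 2 ≤ (2 - ℓ * γ) * w i + ‖v‖ ^ 2 := by
    intro i
    have hexp : ‖(F i z' - F i z) + v‖ ^ 2
        = ‖F i z' - F i z‖ ^ 2 + 2 * w i + ‖v‖ ^ 2 := by
      rw [norm_add_sq_real]
    have hco' : ‖F i z' - F i z‖ ^ 2 ≤ ℓ * t i := hco i z' z
    have : (sarahStep γ F i (z, v)).2 = (F i z' - F i z) + v := by
      simp [sarahStep, hz']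
    rw [this, hexp]
    rw [htw] at hco'
    nlinarith [hco']
  have hsum : ∑ i : Fin n, ‖(sarahStep γ F i (z, v)).2‖ ^ 2
      ≤ (2 - ℓ * γ) * W + (n : ℝ) * ‖v‖ ^ 2 := by
    calc ∑ i : Fin n, ‖(sarahStep γ F i (z, v)).2‖ ^ 2
        ≤ ∑ i : Fin n, ((2 - ℓ * γ) * w i + ‖v‖ ^ 2) := Finset.sum_le_sum fun i _ => hper i
      _ = (2 - ℓ * γ) * W + (n : ℝ) * ‖v‖ ^ 2 := by
          rw [Finset.sum_add_distrib, ← Finset.mul_sum]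
          simp [hW, mul_comm]
  have hn1 : (1 : ℝ) ≤ (n : ℝ) := by exact_mod_cast hn
  have hWle : W ≤ -((n : ℝ) * (μ * γ * ‖v‖ ^ 2)) := by
    have h1 : γ * W ≤ γ * -((n : ℝ) * (μ * γ * ‖v‖ ^ 2)) := by
      rw [hγW]
      nlinarith [hSlb, hn1, sq_nonneg ‖v‖]
    exact le_of_mul_le_mul_left h1 hγ0
  have hP : 0 ≤ (n : ℝ) * (μ * γ * ‖v‖ ^ 2) := by positivity
  have hW0 : W ≤ 0 := by linarith
  have : (2 - ℓ * γ) * W ≤ W := by nlinarith [hγℓ, hW0]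
  calc ∑ i : Fin n, ‖(sarahStep γ F i (z, v)).2‖ ^ 2
      ≤ (2 - ℓ * γ) * W + (n : ℝ) * ‖v‖ ^ 2 := hsum
    _ ≤ W + (n : ℝ) * ‖v‖ ^ 2 := by linarith
    _ ≤ -((n : ℝ) * (μ * γ * ‖v‖ ^ 2)) + (n : ℝ) * ‖v‖ ^ 2 := by linarith [hWle]
    _ = (n : ℝ) * ((1 - γ * μ) * ‖v‖ ^ 2) := by ring

/-- **Lemma 1 (per-step form).** If each `F_i` is `ℓ`-cocoercive, the average `F` is
`μ`-strongly monotone and `0 < γ ≤ 1/ℓ`, then for every `k ∈ {1, …, K}` the SARAH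
inner loop satisfies `𝔼[‖v^k‖²] ≤ (1 - γμ) 𝔼[‖v^{k-1}‖²]`, where the expectation is
the uniform average over all `n^K` index sequences. -/
theorem sarah_vk_step_bound {d n : ℕ} (hn : 1 ≤ n) (ℓ μ : ℝ) (hℓ : 0 < ℓ) (hμ : 0 < μ)
    (F : Fin n → EuclideanSpace ℝ (Fin d) → EuclideanSpace ℝ (Fin d))
    (hco : ∀ i, Cocoercive ℓ (F i)) (hsm : StronglyMonotone μ (opAvg F))
    (γ : ℝ) (hγ0 : 0 < γ) (hγ : γ ≤ 1 / ℓ)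
    (K : ℕ) (hK : 1 ≤ K) (z0 : EuclideanSpace ℝ (Fin d))
    (k : ℕ) (hk1 : 1 ≤ k) (hkK : k ≤ K) :
    (∑ j : Fin K → Fin n, ‖(sarahTraj γ F z0 j k).2‖ ^ 2) / (n : ℝ) ^ K
      ≤ (1 - γ * μ)
        * ((∑ j : Fin K → Fin n, ‖(sarahTraj γ F z0 j (k - 1)).2‖ ^ 2) / (n : ℝ) ^ K) := by
  classical
  obtain ⟨m, rfl⟩ : ∃ m, k = m + 1 := ⟨k - 1, (Nat.succ_pred_eq_of_pos hk1).symm⟩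
  have hm : m < K := lt_of_lt_of_le (Nat.lt_succ_self m) (by omega)
  simp only [Nat.add_sub_cancel]
  have hn0 : (0 : ℝ) < (n : ℝ) ^ K := by positivity
  rw [← mul_div_assoc, div_le_div_iff₀ hn0 hn0]
  have hmain : (∑ j : Fin K → Fin n, ‖(sarahTraj γ F z0 j (m + 1)).2‖ ^ 2)
      ≤ (1 - γ * μ) * ∑ j : Fin K → Fin n, ‖(sarahTraj γ F z0 j m).2‖ ^ 2 := by
    set mF : Fin K := ⟨m, hm⟩ with hmF
    set e := Equiv.funSplitAt mF (Fin n) with he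
    have hsum : ∀ f : (Fin K → Fin n) → ℝ,
        ∑ j, f j = ∑ g : { t // t ≠ mF } → Fin n, ∑ a : Fin n, f (e.symm (a, g)) := by
      intro f
      rw [← Equiv.sum_comp e.symm f, Fintype.sum_prod_type, Finset.sum_comm]
    have hat : ∀ (a : Fin n) (g : { t // t ≠ mF } → Fin n), e.symm (a, g) mF = a := by
      intro a g
      simp [he, Equiv.funSplitAt, Equiv.piSplitAt]
    have a0 : Fin n := ⟨0, hn⟩
    set r : ({ t // t ≠ mF } → Fin n) → EuclideanSpace ℝ (Fin d) × EuclideanSpace ℝ (Fin d) :=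
      fun g => sarahTraj γ F z0 (e.symm (a0, g)) m with hr
    have hindep : ∀ (a : Fin n) (g : { t // t ≠ mF } → Fin n),
        sarahTraj γ F z0 (e.symm (a, g)) m = r g := by
      intro a g
      apply sarahTraj_congr
      intro tt htt
      have hne : tt ≠ mF := by
        intro hcon
        rw [hcon] at htt
        exact absurd htt (lt_irrefl m)
      simp [he, Equiv.funSplitAt, Equiv.piSplitAt, hne]
    have hstep : ∀ (a : Fin n) (g : { t // t ≠ mF } → Fin n),
        sarahTraj γ F z0 (e.symm (a, g)) (m + 1) = sarahStep γ F a (r g) := by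
      intro a g
      rw [sarahTraj_succ γ F z0 _ m hm]
      rw [show (⟨m, hm⟩ : Fin K) = mF from rfl, hat, hindep]
    rw [hsum (fun j => ‖(sarahTraj γ F z0 j (m + 1)).2‖ ^ 2),
        hsum (fun j => ‖(sarahTraj γ F z0 j m).2‖ ^ 2)]
    rw [Finset.mul_sum]
    apply Finset.sum_le_sum
    intro g _
    simp only [hstep, hindep]
    rw [Finset.sum_const]
    simp only [Finset.card_univ, Fintype.card_fin, nsmul_eq_mul]
    calc ∑ a : Fin n, ‖(sarahStep γ F a (r g)).2‖ ^ 2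
        ≤ (n : ℝ) * ((1 - γ * μ) * ‖(r g).2‖ ^ 2) :=
          key_step hn ℓ μ hℓ hμ F hco hsm γ hγ0 hγ (r g)
      _ = (1 - γ * μ) * ((n : ℝ) * ‖(r g).2‖ ^ 2) := by ring
  exact mul_le_mul_of_nonneg_right hmain hn0.le


end
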